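/- arXiv:2310.11367 — 4 statements merged into one kernel-verified Lean document; each statement's English description precedes it below -/
import Mathlib

section
/- Let G be a graph with nonnegative edge capacities and T a subset of its vertices. For subsets S of T, let cut_G(S) denote the minimum capacity of an edge cut separating S from T\S. Then cut_G is submodular: for all S, S' ⊆ T, cut_G(S) + cut_G(S') ≥ cut_G(S ∩ S') + cut_G(S ∪ S'). -/
open Finset
open scoped Classical

/-- The total capacity of edges leaving the vertex set `A`. -/
noncomputable def crossCap {V : Type*} [Fintype V] (c : V → V → ℝ) (A : Finset V) : ℝ :=
  ∑ u ∈ A, ∑ v ∈ Aᶜ, c u v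

/-- `cutVal c T S` is the minimum capacity of an edge cut separating the terminals
in `S` from the terminals in `T \ S`: the minimum over all vertex sets `A` with
`S ⊆ A` and `A` disjoint from `T \ S` of the capacity crossing `A`. -/
noncomputable def cutVal {V : Type*} [Fintype V] (c : V → V → ℝ) (T S : Finset V) : ℝ :=
  Finset.inf' (Finset.univ.filter fun A : Finset V => S ⊆ A ∧ Disjoint (T \ S) A)
    ⟨S, by simp [Finset.sdiff_disjoint]⟩ (fun A => crossCap c A)

lemma crossCap_eq {V : Type*} [Fintype V] (c : V → V → ℝ) (A : Finset V) :
    crossCap c A = ∑ u : V, ∑ v : V, if u ∈ A ∧ v ∉ A then c u v else 0 := by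
  unfold crossCap
  symm
  calc (∑ u : V, ∑ v : V, if u ∈ A ∧ v ∉ A then c u v else 0)
      = ∑ u : V, if u ∈ A then (∑ v : V, if v ∉ A then c u v else 0) else 0 := by
        apply Finset.sum_congr rfl; intro u _
        by_cases hu : u ∈ A <;> simp [hu]
    _ = ∑ u ∈ A, ∑ v : V, if v ∉ A then c u v else 0 := by
        rw [Finset.sum_ite_mem, Finset.univ_inter]
    _ = ∑ u ∈ A, ∑ v ∈ Aᶜ, c u v := by
        apply Finset.sum_congr rfl; intro u _
        rw [← Finset.sum_filter]
        congr 1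
        ext v
        simp

lemma crossCap_submodular {V : Type*} [Fintype V] (c : V → V → ℝ)
    (hc : ∀ u v, 0 ≤ c u v) (A B : Finset V) :
    crossCap c (A ∩ B) + crossCap c (A ∪ B) ≤ crossCap c A + crossCap c B := by
  rw [crossCap_eq, crossCap_eq, crossCap_eq, crossCap_eq,
    ← Finset.sum_add_distrib, ← Finset.sum_add_distrib]
  apply Finset.sum_le_sum
  intro u _
  rw [← Finset.sum_add_distrib, ← Finset.sum_add_distrib]
  apply Finset.sum_le_sum
  intro v _
  by_cases hA : u ∈ A <;> by_cases hB : u ∈ B <;>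
    by_cases hA' : v ∈ A <;> by_cases hB' : v ∈ B <;>
    simp [hA, hB, hA', hB', hc u v]

/-- Submodularity of the terminal cut function. -/
theorem terminal_cut_submodular {V : Type*} [Fintype V] (c : V → V → ℝ)
    (hc : ∀ u v, 0 ≤ c u v) (hsym : ∀ u v, c u v = c v u)
    (T S S' : Finset V) (hS : S ⊆ T) (hS' : S' ⊆ T) :
    cutVal c T (S ∩ S') + cutVal c T (S ∪ S') ≤ cutVal c T S + cutVal c T S' := by
  obtain ⟨A, hAmem, hAeq⟩ := Finset.exists_mem_eq_inf'
    (⟨S, by simp [Finset.sdiff_disjoint]⟩ :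
      (Finset.univ.filter fun A : Finset V => S ⊆ A ∧ Disjoint (T \ S) A).Nonempty)
    (fun A => crossCap c A)
  obtain ⟨B, hBmem, hBeq⟩ := Finset.exists_mem_eq_inf'
    (⟨S', by simp [Finset.sdiff_disjoint]⟩ :
      (Finset.univ.filter fun A : Finset V => S' ⊆ A ∧ Disjoint (T \ S') A).Nonempty)
    (fun A => crossCap c A)
  simp only [Finset.mem_filter, Finset.mem_univ, true_and] at hAmem hBmem
  obtain ⟨hSA, hdA⟩ := hAmem
  obtain ⟨hSB, hdB⟩ := hBmem
  rw [Finset.disjoint_left] at hdA hdB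
  have h1 : cutVal c T (S ∩ S') ≤ crossCap c (A ∩ B) := by
    apply Finset.inf'_le
    simp only [Finset.mem_filter, Finset.mem_univ, true_and]
    refine ⟨Finset.inter_subset_inter hSA hSB, ?_⟩
    rw [Finset.disjoint_left]
    intro x hx hx'
    simp only [Finset.mem_sdiff, Finset.mem_inter, not_and] at hx
    rw [Finset.mem_inter] at hx'
    by_cases hxS : x ∈ S
    · exact hdB (Finset.mem_sdiff.2 ⟨hx.1, hx.2 hxS⟩) hx'.2
    · exact hdA (Finset.mem_sdiff.2 ⟨hx.1, hxS⟩) hx'.1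
  have h2 : cutVal c T (S ∪ S') ≤ crossCap c (A ∪ B) := by
    apply Finset.inf'_le
    simp only [Finset.mem_filter, Finset.mem_univ, true_and]
    refine ⟨Finset.union_subset_union hSA hSB, ?_⟩
    rw [Finset.disjoint_left]
    intro x hx hx'
    simp only [Finset.mem_sdiff, Finset.mem_union, not_or] at hx
    rw [Finset.mem_union] at hx'
    rcases hx' with h | h
    · exact hdA (Finset.mem_sdiff.2 ⟨hx.1, hx.2.1⟩) h
    · exact hdB (Finset.mem_sdiff.2 ⟨hx.1, hx.2.2⟩) h
  have h3 := crossCap_submodular c hc A B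
  have hA' : cutVal c T S = crossCap c A := hAeq
  have hB' : cutVal c T S' = crossCap c B := hBeq
  linarith
end

section
/- The set of realizable vectors is closed under nonnegative scaling and addition (is a convex cone): if π is realized by a graph G with terminal set T and π' is realized by G' with the same terminal set T, then for all reals a, b > 0, the vector aπ + bπ' is realizable (by scaling the capacities of G by a and of G' by b and gluing the two graphs at the terminals). -/
open Finset
open scoped Classical

/-- A vector `π`, indexed by the proper nonempty subsets of the terminal set `T`,
is realizable if there is an edge-capacitated graph containing `T` whose terminal
min-cut values are given by `π`. -/
def Realizable {T : Type} [Fintype T] (π : Finset T → ℝ) : Prop :=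
  ∃ (V : Type) (_ : Fintype V) (ι : T ↪ V) (c : V → V → ℝ),
    (∀ u v, 0 ≤ c u v) ∧ (∀ u v, c u v = c v u) ∧
    ∀ S : Finset T, S.Nonempty → S ≠ Finset.univ →
      π S = cutVal c (Finset.univ.map ι) (S.map ι)

section Helpers

set_option linter.unusedSectionVars false

variable {U W : Type} [Fintype U] [Fintype W]

/-- Extension of a capacity function along an injection, by zero. -/
noncomputable def extCap (f : U → W) (c : U → U → ℝ) : W → W → ℝ :=
  fun x y =>
    if hx : x ∈ Set.range f then
      if hy : y ∈ Set.range f then c hx.choose hy.choose else 0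
    else 0

lemma extCap_apply (f : U → W) (hf : Function.Injective f) (c : U → U → ℝ) (u v : U) :
    extCap f c (f u) (f v) = c u v := by
  have hu : f u ∈ Set.range f := ⟨u, rfl⟩
  have hv : f v ∈ Set.range f := ⟨v, rfl⟩
  simp only [extCap, dif_pos hu, dif_pos hv]
  rw [hf hu.choose_spec, hf hv.choose_spec]

lemma extCap_zero_left (f : U → W) (c : U → U → ℝ) {x : W} (hx : x ∉ Set.range f) (y : W) :
    extCap f c x y = 0 := by unfold extCap; rw [dif_neg hx]

lemma extCap_zero_right (f : U → W) (c : U → U → ℝ) (x : W) {y : W} (hy : y ∉ Set.range f) :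
    extCap f c x y = 0 := by
  unfold extCap
  by_cases hx : x ∈ Set.range f
  · rw [dif_pos hx, dif_neg hy]
  · rw [dif_neg hx]

lemma extCap_nonneg (f : U → W) (c : U → U → ℝ) (h : ∀ u v, 0 ≤ c u v) (x y : W) :
    0 ≤ extCap f c x y := by
  unfold extCap
  split_ifs <;> first | exact h _ _ | exact le_refl 0

lemma extCap_symm (f : U → W) (c : U → U → ℝ) (h : ∀ u v, c u v = c v u) (x y : W) :
    extCap f c x y = extCap f c y x := by
  unfold extCap
  split_ifs <;> first | exact h _ _ | rfl

lemma preimage_compl (f : U → W) (hf : Function.Injective f) (A : Finset W) :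
    Aᶜ.preimage f hf.injOn = (A.preimage f hf.injOn)ᶜ := by
  ext u; simp [Finset.mem_preimage]

lemma crossCap_extCap (f : U → W) (hf : Function.Injective f) (c : U → U → ℝ)
    (A : Finset W) :
    crossCap (extCap f c) A = crossCap c (A.preimage f hf.injOn) := by
  unfold crossCap
  rw [← Finset.sum_preimage f A hf.injOn (fun x => ∑ v ∈ Aᶜ, extCap f c x v)
      (fun x _ hx => Finset.sum_eq_zero fun v _ => extCap_zero_left f c hx v)]
  refine Finset.sum_congr rfl fun u _ => ?_
  rw [← Finset.sum_preimage f Aᶜ hf.injOn (fun v => extCap f c (f u) v)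
      (fun v _ hv => extCap_zero_right f c _ hv), preimage_compl f hf]
  exact Finset.sum_congr rfl fun v _ => extCap_apply f hf c u v

lemma crossCap_comb (c c' : W → W → ℝ) (a b : ℝ) (A : Finset W) :
    crossCap (fun x y => a * c x y + b * c' x y) A
      = a * crossCap c A + b * crossCap c' A := by
  simp [crossCap, Finset.sum_add_distrib, Finset.mul_sum]

lemma feasible_iff {T : Type} [Fintype T] (ι : T ↪ W) (S : Finset T) (A : Finset W) :
    (S.map ι ⊆ A ∧ Disjoint ((Finset.univ.map ι) \ (S.map ι)) A)
      ↔ ∀ t, (ι t ∈ A ↔ t ∈ S) := by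
  constructor
  · rintro ⟨h1, h2⟩ t
    constructor
    · intro hA
      by_contra ht
      exact (Finset.disjoint_left.mp h2)
        (Finset.mem_sdiff.mpr ⟨Finset.mem_map_of_mem _ (Finset.mem_univ t),
          fun hc => ht ((Finset.mem_map' ι).mp hc)⟩) hA
    · intro ht
      exact h1 (Finset.mem_map_of_mem _ ht)
  · intro h
    refine ⟨fun x hx => ?_, Finset.disjoint_left.mpr fun x hx hA => ?_⟩
    · obtain ⟨t, ht, rfl⟩ := Finset.mem_map.mp hx
      exact (h t).mpr ht
    · obtain ⟨hx1, hx2⟩ := Finset.mem_sdiff.mp hx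
      obtain ⟨t, _, rfl⟩ := Finset.mem_map.mp hx1
      exact hx2 (Finset.mem_map_of_mem _ ((h t).mp hA))

lemma cutVal_le_of_feas {T : Type} [Fintype T] (c : W → W → ℝ) (ι : T ↪ W) (S : Finset T)
    (A : Finset W) (hA : ∀ t, (ι t ∈ A ↔ t ∈ S)) :
    cutVal c (Finset.univ.map ι) (S.map ι) ≤ crossCap c A := by
  unfold cutVal
  apply Finset.inf'_le
  rw [Finset.mem_filter]
  exact ⟨Finset.mem_univ _, (feasible_iff ι S A).mpr hA⟩

lemma le_cutVal_of_feas {T : Type} [Fintype T] (c : W → W → ℝ) (ι : T ↪ W) (S : Finset T)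
    {r : ℝ} (hr : ∀ A : Finset W, (∀ t, (ι t ∈ A ↔ t ∈ S)) → r ≤ crossCap c A) :
    r ≤ cutVal c (Finset.univ.map ι) (S.map ι) := by
  unfold cutVal
  apply Finset.le_inf'
  intro A hA
  rw [Finset.mem_filter] at hA
  exact hr A ((feasible_iff ι S A).mp hA.2)

lemma cutVal_exists_feas {T : Type} [Fintype T] (c : W → W → ℝ) (ι : T ↪ W) (S : Finset T) :
    ∃ A : Finset W, (∀ t, (ι t ∈ A ↔ t ∈ S))
      ∧ cutVal c (Finset.univ.map ι) (S.map ι) = crossCap c A := by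
  obtain ⟨A, hmem, hval⟩ := Finset.exists_mem_eq_inf'
    (⟨S.map ι, by simp [Finset.sdiff_disjoint]⟩ : Finset.Nonempty
      (Finset.univ.filter fun A : Finset W =>
        S.map ι ⊆ A ∧ Disjoint ((Finset.univ.map ι) \ (S.map ι)) A))
    (fun A => crossCap c A)
  rw [Finset.mem_filter] at hmem
  exact ⟨A, (feasible_iff ι S A).mp hmem.2, hval⟩

end Helpers

/-- The set of realizable vectors is a convex cone. -/
theorem realizable_convex_cone {T : Type} [Fintype T] (π π' : Finset T → ℝ)
    (h : Realizable π) (h' : Realizable π') (a b : ℝ) (ha : 0 < a) (hb : 0 < b) :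
    Realizable (fun S => a * π S + b * π' S) := by
  classical
  obtain ⟨V, _, ι, c, hc0, hcs, hπ⟩ := h
  obtain ⟨V', _, ι', c', hc0', hcs', hπ'⟩ := h'
  let W : Type := T ⊕ ({v : V // v ∉ Set.range ι} ⊕ {v : V' // v ∉ Set.range ι'})
  let f : V → W := fun v =>
    if h : v ∈ Set.range ι then Sum.inl h.choose else Sum.inr (Sum.inl ⟨v, h⟩)
  let g : V' → W := fun v =>
    if h : v ∈ Set.range ι' then Sum.inl h.choose else Sum.inr (Sum.inr ⟨v, h⟩)
  have hfι : ∀ t, f (ι t) = Sum.inl t := by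
    intro t
    have h : ι t ∈ Set.range ι := ⟨t, rfl⟩
    simp only [f, dif_pos h]
    exact congrArg Sum.inl (ι.injective h.choose_spec)
  have hgι : ∀ t, g (ι' t) = Sum.inl t := by
    intro t
    have h : ι' t ∈ Set.range ι' := ⟨t, rfl⟩
    simp only [g, dif_pos h]
    exact congrArg Sum.inl (ι'.injective h.choose_spec)
  have hf_inl : ∀ {v : V} {t : T}, f v = Sum.inl t → v = ι t := by
    intro v t hv
    by_cases h : v ∈ Set.range ι
    · simp only [f, dif_pos h] at hv
      obtain rfl : h.choose = t := Sum.inl.inj hv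
      exact h.choose_spec.symm
    · simp only [f, dif_neg h] at hv
      exact absurd hv (by simp)
  have hg_inl : ∀ {v : V'} {t : T}, g v = Sum.inl t → v = ι' t := by
    intro v t hv
    by_cases h : v ∈ Set.range ι'
    · simp only [g, dif_pos h] at hv
      obtain rfl : h.choose = t := Sum.inl.inj hv
      exact h.choose_spec.symm
    · simp only [g, dif_neg h] at hv
      exact absurd hv (by simp)
  have hf : Function.Injective f := by
    intro v w hvw
    by_cases hv : v ∈ Set.range ι
    · obtain ⟨t, rfl⟩ := hv
      rw [hfι t] at hvw
      exact (hf_inl hvw.symm).symm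
    · by_cases hw : w ∈ Set.range ι
      · obtain ⟨t, rfl⟩ := hw
        rw [hfι t] at hvw
        exact hf_inl hvw
      · simp only [f, dif_neg hv, dif_neg hw] at hvw
        exact congrArg Subtype.val (Sum.inl_injective (Sum.inr_injective hvw))
  have hg : Function.Injective g := by
    intro v w hvw
    by_cases hv : v ∈ Set.range ι'
    · obtain ⟨t, rfl⟩ := hv
      rw [hgι t] at hvw
      exact (hg_inl hvw.symm).symm
    · by_cases hw : w ∈ Set.range ι'
      · obtain ⟨t, rfl⟩ := hw
        rw [hgι t] at hvw
        exact hg_inl hvw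
      · simp only [g, dif_neg hv, dif_neg hw] at hvw
        exact congrArg Subtype.val (Sum.inr_injective (Sum.inr_injective hvw))
  have hfg : ∀ {v : V} {w : V'}, f v = g w → ∃ t, v = ι t ∧ w = ι' t := by
    intro v w hvw
    by_cases hv : v ∈ Set.range ι
    · obtain ⟨t, rfl⟩ := hv
      rw [hfι t] at hvw
      exact ⟨t, rfl, hg_inl hvw.symm⟩
    · by_cases hw : w ∈ Set.range ι'
      · obtain ⟨t, rfl⟩ := hw
        rw [hgι t] at hvw
        exact ⟨t, hf_inl hvw, rfl⟩
      · simp only [f, g, dif_neg hv, dif_neg hw] at hvw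
        exact absurd (Sum.inr.inj hvw) (by simp)
  let d : W → W → ℝ := fun x y => a * extCap f c x y + b * extCap g c' x y
  refine ⟨W, inferInstance, ⟨Sum.inl, Sum.inl_injective⟩, d, ?_, ?_, ?_⟩
  · intro x y
    exact add_nonneg (mul_nonneg ha.le (extCap_nonneg f c hc0 x y))
      (mul_nonneg hb.le (extCap_nonneg g c' hc0' x y))
  · intro x y
    simp only [d, extCap_symm f c hcs x y, extCap_symm g c' hcs' x y]
  · intro S hS hSu
    simp only [hπ S hS hSu, hπ' S hS hSu]
    set ιW : T ↪ W := ⟨Sum.inl, Sum.inl_injective⟩ with hιW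
    have hd : ∀ A : Finset W, crossCap d A
        = a * crossCap c (A.preimage f hf.injOn) + b * crossCap c' (A.preimage g hg.injOn) := by
      intro A
      rw [show crossCap d A = crossCap (fun x y => a * extCap f c x y + b * extCap g c' x y) A
        from rfl, crossCap_comb, crossCap_extCap f hf, crossCap_extCap g hg]
    apply le_antisymm
    · -- a cutV + b cutV' ≤ cutVal d
      apply le_cutVal_of_feas
      intro A hA
      rw [hd A]
      have h1 : cutVal c (Finset.univ.map ι) (S.map ι)
          ≤ crossCap c (A.preimage f hf.injOn) := by
        apply cutVal_le_of_feas
        intro t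
        rw [Finset.mem_preimage, hfι t]
        exact hA t
      have h2 : cutVal c' (Finset.univ.map ι') (S.map ι')
          ≤ crossCap c' (A.preimage g hg.injOn) := by
        apply cutVal_le_of_feas
        intro t
        rw [Finset.mem_preimage, hgι t]
        exact hA t
      exact add_le_add (mul_le_mul_of_nonneg_left h1 ha.le)
        (mul_le_mul_of_nonneg_left h2 hb.le)
    · -- cutVal d ≤ a cutV + b cutV' : glue optimal cuts
      obtain ⟨B₁, hB₁f, hB₁⟩ := cutVal_exists_feas c ι S
      obtain ⟨B₂, hB₂f, hB₂⟩ := cutVal_exists_feas c' ι' S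
      rw [hB₁, hB₂]
      set A : Finset W := B₁.map ⟨f, hf⟩ ∪ B₂.map ⟨g, hg⟩ with hA
      have hA1 : A.preimage f hf.injOn = B₁ := by
        ext v
        rw [Finset.mem_preimage, hA]
        simp only [Finset.mem_union, Finset.mem_map, Function.Embedding.coeFn_mk]
        constructor
        · rintro (⟨u, hu, hfu⟩ | ⟨u, hu, hfu⟩)
          · rwa [← hf hfu]
          · obtain ⟨t, rfl, rfl⟩ := hfg hfu.symm
            exact (hB₁f t).mpr ((hB₂f t).mp hu)
        · intro hv
          exact Or.inl ⟨v, hv, rfl⟩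
      have hA2 : A.preimage g hg.injOn = B₂ := by
        ext v
        rw [Finset.mem_preimage, hA]
        simp only [Finset.mem_union, Finset.mem_map, Function.Embedding.coeFn_mk]
        constructor
        · rintro (⟨u, hu, hfu⟩ | ⟨u, hu, hfu⟩)
          · obtain ⟨t, rfl, rfl⟩ := hfg hfu
            exact (hB₂f t).mpr ((hB₁f t).mp hu)
          · rwa [← hg hfu]
        · intro hv
          exact Or.inr ⟨v, hv, rfl⟩
      have hAfeas : ∀ t, (ιW t ∈ A ↔ t ∈ S) := by
        intro t
        constructor
        · intro ht
          rcases Finset.mem_union.mp ht with h1 | h1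
          · obtain ⟨u, hu, hfu⟩ := Finset.mem_map.mp h1
            obtain rfl := hf_inl hfu
            exact (hB₁f t).mp hu
          · obtain ⟨u, hu, hfu⟩ := Finset.mem_map.mp h1
            obtain rfl := hg_inl hfu
            exact (hB₂f t).mp hu
        · intro ht
          apply Finset.mem_union_left
          show Sum.inl t ∈ _
          rw [← hfι t]
          exact Finset.mem_map_of_mem _ ((hB₁f t).mpr ht)
      have := cutVal_le_of_feas d ιW S A hAfeas
      rwa [hd A, hA1, hA2] at this
end

section
/- (Main theorem) Let G be an edge-capacitated graph, T a set of its vertices, and β, γ type vectors. If the support of γ is a laminar family and the metric D_β dominates D_γ pointwise on pairs of terminals, then Σ_S β_S · cut_G(S) ≥ Σ_S γ_S · cut_G(S). -/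
open Finset
open scoped Classical

def cutsPair {V : Type*} (S : Finset V) (t t' : V) : Prop :=
  (t ∈ S ∧ t' ∉ S) ∨ (t' ∈ S ∧ t ∉ S)

/-- The collection of proper nonempty subsets of a terminal set `T`. -/
noncomputable def properSubsetsOf {V : Type*} [Fintype V] (T : Finset V) : Finset (Finset V) :=
  Finset.univ.filter fun S : Finset V => S ⊆ T ∧ S.Nonempty ∧ S ≠ T

/-- The metric on the terminals induced by a type vector `β`. -/
noncomputable def Dmet {V : Type*} [Fintype V] (T : Finset V) (β : Finset V → ℝ) (t t' : V) : ℝ :=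
  ∑ S ∈ properSubsetsOf T, β S * (if cutsPair S t t' then 1 else 0)

set_option linter.unusedSectionVars false
set_option linter.unusedVariables false
set_option linter.unreachableTactic false
set_option linter.unusedTactic false
set_option maxHeartbeats 1000000

namespace LamAux

variable {V : Type*} [Fintype V]

noncomputable def ell1 (I : Finset (Finset V)) (g h : Finset V → ℝ) : ℝ :=
  ∑ S ∈ I, |g S - h S|

noncomputable def depthF (I : Finset (Finset V)) (w : Finset V → ℝ) (g : Finset V → ℝ) : ℝ :=
  ∑ S ∈ I, (w S - g S)

def OkX (I : Finset (Finset V)) (w : Finset V → ℝ) (g : Finset V → ℝ) : Prop :=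
  (∀ S ∈ I, 0 ≤ g S ∧ g S ≤ w S) ∧
  (∀ S1 ∈ I, ∀ S2 ∈ I, S1 ⊂ S2 → 0 < g S2 → g S1 = w S1)

def ChainPt (I : Finset (Finset V)) (w : Finset V → ℝ) (g : Finset V → ℝ) : Prop :=
  ∀ S1 ∈ I, ∀ S2 ∈ I, g S1 < w S1 → g S2 < w S2 → S1 ⊆ S2 ∨ S2 ⊆ S1

def Good (I : Finset (Finset V)) (w : Finset V → ℝ) (g : Finset V → ℝ) : Prop :=
  OkX I w g ∧ ChainPt I w g

noncomputable def defB (I : Finset (Finset V)) (w g : Finset V → ℝ) (S : Finset V) : ℝ :=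
  ∑ S' ∈ I.filter (· ⊂ S), (w S' - g S')

noncomputable def fill (I : Finset (Finset V)) (w g : Finset V → ℝ) (δ : ℝ) :
    Finset V → ℝ :=
  fun S => if S ∈ I then min (w S) (g S + max 0 (δ - defB I w g S)) else g S

lemma ell1_symm (I : Finset (Finset V)) (g h : Finset V → ℝ) :
    ell1 I g h = ell1 I h g := by
  unfold ell1; exact Finset.sum_congr rfl fun S _ => abs_sub_comm _ _

lemma ell1_nonneg (I : Finset (Finset V)) (g h : Finset V → ℝ) : 0 ≤ ell1 I g h :=
  Finset.sum_nonneg fun S _ => abs_nonneg _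

lemma ell1_triangle (I : Finset (Finset V)) (g h k : Finset V → ℝ) :
    ell1 I g k ≤ ell1 I g h + ell1 I h k := by
  unfold ell1
  rw [← Finset.sum_add_distrib]
  exact Finset.sum_le_sum fun S _ => abs_sub_le _ _ _

lemma ell1_max_split (I : Finset (Finset V)) (g h : Finset V → ℝ) :
    ell1 I g h = ell1 I g (fun S => max (g S) (h S)) + ell1 I (fun S => max (g S) (h S)) h := by
  unfold ell1
  rw [← Finset.sum_add_distrib]
  refine Finset.sum_congr rfl fun S _ => ?_
  rcases le_total (g S) (h S) with h1 | h1 <;>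
    simp [max_eq_right, max_eq_left, h1, abs_of_nonpos, abs_of_nonneg, sub_nonneg, sub_nonpos] <;>
    ring

lemma ell1_between (I : Finset (Finset V)) (g h k : Finset V → ℝ)
    (h1 : ∀ S ∈ I, g S ≤ h S) (h2 : ∀ S ∈ I, h S ≤ k S) :
    ell1 I g k = ell1 I g h + ell1 I h k := by
  unfold ell1
  rw [← Finset.sum_add_distrib]
  refine Finset.sum_congr rfl fun S hS => ?_
  have a1 := h1 S hS; have a2 := h2 S hS
  rw [abs_of_nonpos (by linarith), abs_of_nonpos (by linarith), abs_of_nonpos (by linarith)]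
  ring

lemma ell1_of_le (I : Finset (Finset V)) (w g h : Finset V → ℝ)
    (h1 : ∀ S ∈ I, g S ≤ h S) :
    ell1 I g h = depthF I w g - depthF I w h := by
  unfold ell1 depthF
  rw [← Finset.sum_sub_distrib]
  refine Finset.sum_congr rfl fun S hS => ?_
  rw [abs_of_nonpos (by linarith [h1 S hS])]; ring


section Fill

variable (I : Finset (Finset V)) (w g : Finset V → ℝ) (δ : ℝ)

lemma fill_ge (hg : OkX I w g) : ∀ S ∈ I, g S ≤ fill I w g δ S := by
  intro S hS
  simp only [fill, if_pos hS]
  exact le_min (hg.1 S hS).2 (le_add_of_nonneg_right (le_max_left _ _))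

lemma fill_le_w (hg : OkX I w g) : ∀ S ∈ I, fill I w g δ S ≤ w S := by
  intro S hS; simp only [fill, if_pos hS]; exact min_le_left _ _

lemma defB_nonneg (hg : OkX I w g) (S : Finset V) : 0 ≤ defB I w g S :=
  Finset.sum_nonneg fun S' hS' => by
    have := (hg.1 S' (Finset.mem_of_mem_filter _ hS')).2; linarith

lemma defB_mono (hg : OkX I w g) {S1 S2 : Finset V} (h1 : S1 ∈ I) (hss : S1 ⊂ S2) :
    defB I w g S1 + (w S1 - g S1) ≤ defB I w g S2 := by
  have hins : insert S1 (I.filter (· ⊂ S1)) ⊆ I.filter (· ⊂ S2) := by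
    intro x hx
    rcases Finset.mem_insert.mp hx with rfl | hx
    · exact Finset.mem_filter.mpr ⟨h1, hss⟩
    · rcases Finset.mem_filter.mp hx with ⟨hxI, hxs⟩
      exact Finset.mem_filter.mpr ⟨hxI, hxs.trans hss⟩
  have hnm : S1 ∉ I.filter (· ⊂ S1) := by
    simp only [Finset.mem_filter]
    rintro ⟨-, h⟩
    exact h.ne rfl
  have hmain : ∑ x ∈ insert S1 (I.filter (· ⊂ S1)), (w x - g x)
      ≤ ∑ x ∈ I.filter (· ⊂ S2), (w x - g x) := by
    refine Finset.sum_le_sum_of_subset_of_nonneg hins fun x hx _ => ?_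
    have := (hg.1 x (Finset.mem_of_mem_filter _ hx)).2
    linarith
  rw [Finset.sum_insert hnm] at hmain
  unfold defB
  linarith [hmain]

lemma fill_okX (hg : OkX I w g) (hδ : 0 ≤ δ) : OkX I w (fill I w g δ) := by
  constructor
  · intro S hS
    refine ⟨le_trans (hg.1 S hS).1 (fill_ge I w g δ hg S hS), fill_le_w I w g δ hg S hS⟩
  · intro S1 h1 S2 h2 hss hpos
    have hle := fill_le_w I w g δ hg S1 h1
    by_cases hg2 : 0 < g S2
    · have := hg.2 S1 h1 S2 h2 hss hg2
      have := fill_ge I w g δ hg S1 h1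
      linarith
    · push_neg at hg2
      have hg2' : g S2 = 0 := le_antisymm hg2 (hg.1 S2 h2).1
      have hδ2 : defB I w g S2 < δ := by
        simp only [fill, if_pos h2, hg2', zero_add, lt_min_iff] at hpos
        rcases hpos with ⟨_, h⟩
        by_contra hcon
        push_neg at hcon
        rw [max_eq_left (by linarith)] at h
        exact lt_irrefl _ h
      have hmono := defB_mono I w g hg h1 hss
      have : w S1 - g S1 ≤ max 0 (δ - defB I w g S1) :=
        le_trans (by linarith [defB_nonneg I w g hg S1]) (le_max_right _ _)
      simp only [fill, if_pos h1]
      exact min_eq_left (by linarith)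
lemma fill_not_def (hg : OkX I w g) {S : Finset V} (hS : S ∈ I) (h : g S = w S) :
    fill I w g δ S = w S := by
  simp only [fill, if_pos hS]
  exact min_eq_left (by rw [h]; exact le_add_of_nonneg_right (le_max_left _ _))

lemma fill_chain (hg : Good I w g) (hδ : 0 ≤ δ) : ChainPt I w (fill I w g δ) := by
  intro S1 h1 S2 h2 hd1 hd2
  refine hg.2 S1 h1 S2 h2 ?_ ?_
  · by_contra hcon; push_neg at hcon
    have := le_antisymm (hg.1.1 S1 h1).2 hcon
    rw [fill_not_def I w g δ hg.1 h1 this] at hd1; exact lt_irrefl _ hd1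
  · by_contra hcon; push_neg at hcon
    have := le_antisymm (hg.1.1 S2 h2).2 hcon
    rw [fill_not_def I w g δ hg.1 h2 this] at hd2; exact lt_irrefl _ hd2

lemma min_add_min (a b : ℝ) (ha : 0 ≤ a) (hb : 0 ≤ b) (hδ : 0 ≤ δ) :
    min δ b + min a (max 0 (δ - b)) = min δ (b + a) := by
  simp only [min_def, max_def]
  split_ifs <;> linarith

lemma tele_aux (w g : Finset V → ℝ) (δ : ℝ) (hδ : 0 ≤ δ) :
    ∀ (n : ℕ) (C : Finset (Finset V)), C.card = n →
    (∀ S ∈ C, 0 ≤ w S - g S) →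
    (∀ S1 ∈ C, ∀ S2 ∈ C, S1 ⊆ S2 ∨ S2 ⊆ S1) →
    ∑ S ∈ C, min (w S - g S) (max 0 (δ - ∑ S' ∈ C.filter (· ⊂ S), (w S' - g S')))
      = min δ (∑ S ∈ C, (w S - g S)) := by
  intro n
  induction n with
  | zero =>
    intro C hC _ _
    rw [Finset.card_eq_zero.mp hC]
    simp [min_eq_left hδ, hδ]
  | succ n ih =>
    intro C hC hnn hchain
    have hne : C.Nonempty := Finset.card_pos.mp (by omega)
    obtain ⟨M, hM, hMmax⟩ := C.exists_max_image (fun S => S.card) hne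
    have hsub : ∀ S ∈ C, S ≠ M → S ⊂ M := by
      intro S hS hSM
      rcases hchain S hS M hM with h | h
      · exact Finset.ssubset_iff_subset_ne.mpr ⟨h, hSM⟩
      · have := Finset.eq_of_subset_of_card_le h (hMmax S hS)
        exact absurd this.symm hSM
    have hfM : C.filter (· ⊂ M) = C.erase M := by
      ext S
      simp only [Finset.mem_filter, Finset.mem_erase]
      constructor
      · rintro ⟨hS, hss⟩; exact ⟨hss.ne, hS⟩
      · rintro ⟨hne', hS⟩; exact ⟨hS, hsub S hS hne'⟩
    have hfS : ∀ S ∈ C.erase M, C.filter (· ⊂ S) = (C.erase M).filter (· ⊂ S) := by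
      intro S hS
      ext S'
      simp only [Finset.mem_filter, Finset.mem_erase]
      constructor
      · rintro ⟨hS', hss⟩
        refine ⟨⟨?_, hS'⟩, hss⟩
        rintro rfl
        exact ((hsub S (Finset.mem_of_mem_erase hS) (Finset.mem_erase.mp hS).1).trans hss).ne rfl
      · rintro ⟨⟨_, hS'⟩, hss⟩; exact ⟨hS', hss⟩
    have key := Finset.sum_erase_add C
      (fun S => min (w S - g S) (max 0 (δ - ∑ S' ∈ C.filter (· ⊂ S), (w S' - g S')))) hM
    rw [← key]
    have ihload := ih (C.erase M) (by rw [Finset.card_erase_of_mem hM, hC]; rfl)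
      (fun S hS => hnn S (Finset.mem_of_mem_erase hS))
      (fun S1 h1 S2 h2 => hchain S1 (Finset.mem_of_mem_erase h1) S2 (Finset.mem_of_mem_erase h2))
    have hagree : ∑ S ∈ C.erase M,
        min (w S - g S) (max 0 (δ - ∑ S' ∈ C.filter (· ⊂ S), (w S' - g S')))
        = ∑ S ∈ C.erase M,
        min (w S - g S) (max 0 (δ - ∑ S' ∈ (C.erase M).filter (· ⊂ S), (w S' - g S'))) := by
      refine Finset.sum_congr rfl fun S hS => ?_
      rw [hfS S hS]
    rw [hagree, ihload]
    simp only [hfM]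
    have hbnn : 0 ≤ ∑ S ∈ C.erase M, (w S - g S) :=
      Finset.sum_nonneg fun S hS => hnn S (Finset.mem_of_mem_erase hS)
    rw [← Finset.sum_erase_add C (fun S => w S - g S) hM]
    exact min_add_min δ (w M - g M) (∑ S ∈ C.erase M, (w S - g S)) (hnn M hM) hbnn hδ

lemma fill_sum (hg : Good I w g) (hδ : 0 ≤ δ) :
    ∑ S ∈ I, (fill I w g δ S - g S) = min δ (depthF I w g) := by
  classical
  set C := I.filter (fun S => g S < w S) with hCdef
  have hCsub : C ⊆ I := Finset.filter_subset _ _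
  have hzero : ∀ S ∈ I, S ∉ C → fill I w g δ S - g S = 0 := by
    intro S hS hSC
    have : ¬ g S < w S := fun h => hSC (Finset.mem_filter.mpr ⟨hS, h⟩)
    have heq : g S = w S := le_antisymm (hg.1.1 S hS).2 (not_lt.mp this)
    rw [fill_not_def I w g δ hg.1 hS heq, heq]; ring
  have hzero' : ∀ S ∈ I, S ∉ C → w S - g S = 0 := by
    intro S hS hSC
    have : ¬ g S < w S := fun h => hSC (Finset.mem_filter.mpr ⟨hS, h⟩)
    have := le_antisymm (hg.1.1 S hS).2 (not_lt.mp this)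
    linarith
  have hsum1 : ∑ S ∈ I, (fill I w g δ S - g S) = ∑ S ∈ C, (fill I w g δ S - g S) :=
    (Finset.sum_subset hCsub hzero).symm
  have hdepth : depthF I w g = ∑ S ∈ C, (w S - g S) :=
    (Finset.sum_subset hCsub hzero').symm
  have hdefB : ∀ S ∈ C, defB I w g S = ∑ S' ∈ C.filter (· ⊂ S), (w S' - g S') := by
    intro S hS
    refine (Finset.sum_subset ?_ ?_).symm
    · intro x hx
      rcases Finset.mem_filter.mp hx with ⟨hx1, hx2⟩
      exact Finset.mem_filter.mpr ⟨hCsub hx1, hx2⟩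
    · intro x hx hxn
      rcases Finset.mem_filter.mp hx with ⟨hx1, hx2⟩
      refine hzero' x hx1 fun hxC => hxn (Finset.mem_filter.mpr ⟨hxC, hx2⟩)
  have hterm : ∀ S ∈ C, fill I w g δ S - g S
      = min (w S - g S) (max 0 (δ - ∑ S' ∈ C.filter (· ⊂ S), (w S' - g S'))) := by
    intro S hS
    have hSI := hCsub hS
    simp only [fill, if_pos hSI]
    rw [← hdefB S hS]
    rcases le_total (w S) (g S + max 0 (δ - defB I w g S)) with h | h
    · rw [min_eq_left h, min_eq_left (by linarith)]
    · rw [min_eq_right h, min_eq_right (by linarith)]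
      ring
  rw [hsum1, Finset.sum_congr rfl hterm, hdepth]
  refine tele_aux w g δ hδ C.card C rfl ?_ ?_
  · intro S hS
    have := (Finset.mem_filter.mp hS).2; linarith
  · intro S1 h1 S2 h2
    rcases Finset.mem_filter.mp h1 with ⟨h1I, h1d⟩
    rcases Finset.mem_filter.mp h2 with ⟨h2I, h2d⟩
    exact hg.2 S1 h1I S2 h2I h1d h2d

end Fill

lemma depthF_nonneg (I : Finset (Finset V)) (w g : Finset V → ℝ) (hg : OkX I w g) :
    0 ≤ depthF I w g :=
  Finset.sum_nonneg fun S hS => by have := (hg.1 S hS).2; linarith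

lemma fill_eq_top (I : Finset (Finset V)) (w g : Finset V → ℝ) (δ : ℝ)
    (hg : OkX I w g) (hδ : depthF I w g ≤ δ) : ∀ S ∈ I, fill I w g δ S = w S := by
  intro S hS
  have hins : insert S (I.filter (· ⊂ S)) ⊆ I := by
    intro x hx
    rcases Finset.mem_insert.mp hx with rfl | hx
    · exact hS
    · exact Finset.mem_of_mem_filter _ hx
  have hnm : S ∉ I.filter (· ⊂ S) := by
    simp only [Finset.mem_filter]
    rintro ⟨-, h⟩
    exact h.ne rfl
  have hmain : ∑ x ∈ insert S (I.filter (· ⊂ S)), (w x - g x) ≤ depthF I w g := by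
    refine Finset.sum_le_sum_of_subset_of_nonneg hins fun x hx _ => ?_
    have := (hg.1 x hx).2; linarith
  rw [Finset.sum_insert hnm] at hmain
  have hkey : w S - g S ≤ max 0 (δ - defB I w g S) := by
    refine le_trans ?_ (le_max_right _ _)
    unfold defB
    linarith
  simp only [fill, if_pos hS]
  exact min_eq_left (by linarith)

lemma okX_max (I : Finset (Finset V)) (w g h : Finset V → ℝ)
    (hg : OkX I w g) (hh : OkX I w h) : OkX I w (fun S => max (g S) (h S)) := by
  constructor
  · intro S hS
    exact ⟨le_trans (hg.1 S hS).1 (le_max_left _ _),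
      max_le (hg.1 S hS).2 (hh.1 S hS).2⟩
  · intro S1 h1 S2 h2 hss hpos
    simp only [lt_max_iff] at hpos
    have hgle := (hg.1 S1 h1).2
    have hhle := (hh.1 S1 h1).2
    rcases hpos with hp | hp
    · have := hg.2 S1 h1 S2 h2 hss hp
      simp only []
      rw [max_eq_left (by linarith)]
      exact this
    · have := hh.2 S1 h1 S2 h2 hss hp
      simp only []
      rw [max_eq_right (by linarith)]
      exact this

lemma comparable (I : Finset (Finset V)) (w p m : Finset V → ℝ)
    (hp : OkX I w p) (hm : OkX I w m)
    (hcc : ∀ S1 ∈ I, ∀ S2 ∈ I, p S1 ≠ m S1 → p S2 ≠ m S2 → S1 ⊆ S2 ∨ S2 ⊆ S1) :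
    (∀ S ∈ I, p S ≤ m S) ∨ (∀ S ∈ I, m S ≤ p S) := by
  by_contra hcon
  push_neg at hcon
  obtain ⟨⟨S1, h1, hlt1⟩, ⟨S2, h2, hlt2⟩⟩ := hcon
  have hne1 : p S1 ≠ m S1 := ne_of_gt hlt1
  have hne2 : p S2 ≠ m S2 := ne_of_lt hlt2
  have hS12 : S1 ≠ S2 := by
    rintro rfl; exact absurd hlt1 (not_lt.mpr (le_of_lt hlt2))
  rcases hcc S1 h1 S2 h2 hne1 hne2 with h | h
  · have hss : S1 ⊂ S2 := Finset.ssubset_iff_subset_ne.mpr ⟨h, hS12⟩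
    have hpos : 0 < m S2 := lt_of_le_of_lt (hp.1 S2 h2).1 hlt2
    have := hm.2 S1 h1 S2 h2 hss hpos
    have hle := (hp.1 S1 h1).2
    linarith
  · have hss : S2 ⊂ S1 := Finset.ssubset_iff_subset_ne.mpr ⟨h, hS12.symm⟩
    have hpos : 0 < p S1 := lt_of_le_of_lt (hm.1 S1 h1).1 hlt1
    have := hp.2 S2 h2 S1 h1 hss hpos
    have hle := (hm.1 S2 h2).2
    linarith

lemma depth_fill (I : Finset (Finset V)) (w g : Finset V → ℝ) (δ : ℝ)
    (hg : Good I w g) (hδ : 0 ≤ δ) :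
    depthF I w (fill I w g δ) = depthF I w g - min δ (depthF I w g) := by
  have h := fill_sum I w g δ hg hδ
  unfold depthF at h ⊢
  rw [← h, ← Finset.sum_sub_distrib]
  exact Finset.sum_congr rfl fun S _ => by ring

lemma ell1_fill (I : Finset (Finset V)) (w g : Finset V → ℝ) (δ : ℝ)
    (hg : Good I w g) (hδ : 0 ≤ δ) :
    ell1 I g (fill I w g δ) = min δ (depthF I w g) := by
  rw [ell1_of_le I w g (fill I w g δ) (fill_ge I w g δ hg.1),
    depth_fill I w g δ hg hδ]
  ring

lemma helly (I : Finset (Finset V)) (w : Finset V → ℝ) (hw : ∀ S ∈ I, 0 < w S)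
    (A : Finset V) (hA : A.Nonempty) (ρ : V → Finset V → ℝ)
    (hGood : ∀ x ∈ A, Good I w (ρ x)) (r : V → ℝ) (hr : ∀ x ∈ A, 0 ≤ r x)
    (hpair : ∀ x ∈ A, ∀ y ∈ A, ell1 I (ρ x) (ρ y) ≤ r x + r y) :
    ∃ p, Good I w p ∧ ∀ x ∈ A, ell1 I p (ρ x) ≤ r x := by
  obtain ⟨x0, hx0, hmax⟩ := A.exists_max_image (fun x => depthF I w (ρ x) - r x) hA
  set g := ρ x0 with hgdef
  have hGg : Good I w g := hGood x0 hx0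
  set δ := min (r x0) (depthF I w g) with hδdef
  have hδ0 : 0 ≤ δ := le_min (hr x0 hx0) (depthF_nonneg I w g hGg.1)
  set p := fill I w g δ with hpdef
  have hGp : Good I w p := ⟨fill_okX I w g δ hGg.1 hδ0, fill_chain I w g δ hGg hδ0⟩
  have hgp : ∀ S ∈ I, g S ≤ p S := fill_ge I w g δ hGg.1
  have hell : ell1 I g p = δ := by
    rw [hpdef, ell1_fill I w g δ hGg hδ0]
    exact min_eq_left (min_le_right _ _)
  have hdp : depthF I w p = depthF I w g - δ := by
    rw [hpdef, depth_fill I w g δ hGg hδ0, min_eq_left (min_le_right _ _)]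
  refine ⟨p, hGp, ?_⟩
  intro y hy
  set q := ρ y with hqdef
  have hGq : Good I w q := hGood y hy
  set m := fun S => max (g S) (q S) with hmdef
  have hOm : OkX I w m := okX_max I w g q hGg.1 hGq.1
  have hqm : ∀ S ∈ I, q S ≤ m S := fun S _ => le_max_right _ _
  have hgm : ∀ S ∈ I, g S ≤ m S := fun S _ => le_max_left _ _
  have hcc : ∀ S1 ∈ I, ∀ S2 ∈ I, p S1 ≠ m S1 → p S2 ≠ m S2 → S1 ⊆ S2 ∨ S2 ⊆ S1 := by
    have key : ∀ S ∈ I, p S ≠ m S → g S < w S := by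
      intro S hS hne
      by_contra hcon
      push_neg at hcon
      have heq : g S = w S := le_antisymm (hGg.1.1 S hS).2 hcon
      have hpw : p S = w S := fill_not_def I w g δ hGg.1 hS heq
      have hmw : m S = w S := by
        rw [hmdef]
        simp only []
        rw [heq]
        exact max_eq_left (hGq.1.1 S hS).2
      rw [hpw, hmw] at hne; exact hne rfl
    intro S1 h1 S2 h2 hne1 hne2
    exact hGg.2 S1 h1 S2 h2 (key S1 h1 hne1) (key S2 h2 hne2)
  rcases le_or_gt (r x0) (depthF I w g) with hle | hlt
  · have hδval : δ = r x0 := min_eq_left hle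
    rcases comparable I w p m hGp.1 hOm hcc with hpm | hmp
    · -- p ≤ m
      have e1 : ell1 I g q = ell1 I g m + ell1 I m q := ell1_max_split I g q
      have e2 : ell1 I g m = ell1 I g p + ell1 I p m := ell1_between I g p m hgp hpm
      have tri : ell1 I p q ≤ ell1 I p m + ell1 I m q := ell1_triangle I p m q
      have hbound := hpair x0 hx0 y hy
      rw [← hgdef, ← hqdef] at hbound
      show ell1 I p q ≤ r y
      have hsymm : ell1 I p q = ell1 I q p := ell1_symm I p q
      linarith [hell, hδval]
    · -- m ≤ p, so q ≤ p
      have hqp : ∀ S ∈ I, q S ≤ p S := fun S hS => le_trans (hqm S hS) (hmp S hS)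
      have : ell1 I q p = depthF I w q - depthF I w p := ell1_of_le I w q p hqp
      show ell1 I p q ≤ r y
      rw [ell1_symm I p q, this, hdp, hδval]
      have := hmax y hy
      simp only [← hgdef, ← hqdef] at this
      linarith
  · have hδval : δ = depthF I w g := min_eq_right (le_of_lt hlt)
    have htop : ∀ S ∈ I, p S = w S :=
      fill_eq_top I w g δ hGg.1 (le_of_eq hδval.symm)
    have hqp : ∀ S ∈ I, q S ≤ p S := by
      intro S hS; rw [htop S hS]; exact (hGq.1.1 S hS).2
    have hdp0 : depthF I w p = 0 := by
      unfold depthF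
      refine Finset.sum_eq_zero fun S hS => by rw [htop S hS]; ring
    have : ell1 I q p = depthF I w q - depthF I w p := ell1_of_le I w q p hqp
    show ell1 I p q ≤ r y
    rw [ell1_symm I p q, this, hdp0]
    have := hmax y hy
    simp only [← hgdef, ← hqdef] at this
    linarith


lemma ell1_self (I : Finset (Finset V)) (g : Finset V → ℝ) : ell1 I g g = 0 := by
  unfold ell1; simp

lemma good_top (I : Finset (Finset V)) (w : Finset V → ℝ) (hw : ∀ S ∈ I, 0 < w S) :
    Good I w (fun S => w S) :=
  ⟨⟨fun S hS => ⟨le_of_lt (hw S hS), le_refl _⟩, fun S1 h1 _ _ _ _ => rfl⟩,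
   fun S1 _ _ _ h1 _ => absurd h1 (lt_irrefl _)⟩

lemma extension (I : Finset (Finset V)) (w : Finset V → ℝ) (hw : ∀ S ∈ I, 0 < w S)
    (d : V → V → ℝ) (hd0 : ∀ u v, 0 ≤ d u v) (hdsymm : ∀ u v, d u v = d v u)
    (htri : ∀ u v x, d u x ≤ d u v + d v x)
    (T : Finset V) (ρ0 : V → Finset V → ℝ) (hρ0 : ∀ t ∈ T, Good I w (ρ0 t))
    (hlip : ∀ t ∈ T, ∀ t' ∈ T, ell1 I (ρ0 t) (ρ0 t') ≤ d t t') :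
    ∃ ρ : V → Finset V → ℝ, (∀ t ∈ T, ρ t = ρ0 t) ∧ (∀ v, Good I w (ρ v)) ∧
      (∀ u v, ell1 I (ρ u) (ρ v) ≤ d u v) := by
  classical
  have main : ∀ D : Finset V, ∃ ρ : V → Finset V → ℝ,
      (∀ t ∈ T, ρ t = ρ0 t) ∧ (∀ v ∈ T ∪ D, Good I w (ρ v)) ∧
      (∀ u ∈ T ∪ D, ∀ v ∈ T ∪ D, ell1 I (ρ u) (ρ v) ≤ d u v) := by
    intro D
    induction D using Finset.induction_on with
    | empty =>
      refine ⟨ρ0, fun t _ => rfl, ?_, ?_⟩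
      · intro v hv; rw [Finset.union_empty] at hv; exact hρ0 v hv
      · intro u hu v hv
        rw [Finset.union_empty] at hu hv
        exact hlip u hu v hv
    | @insert a D haD ih =>
      obtain ⟨ρ, h1, h2, h3⟩ := ih
      by_cases haT : a ∈ T ∪ D
      · have hmem : ∀ v, v ∈ T ∪ insert a D → v ∈ T ∪ D := by
          intro v hv
          rcases Finset.mem_union.mp hv with h | h
          · exact Finset.mem_union_left _ h
          · rcases Finset.mem_insert.mp h with rfl | h
            · exact haT
            · exact Finset.mem_union_right _ h
        exact ⟨ρ, h1, fun v hv => h2 v (hmem v hv),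
          fun u hu v hv => h3 u (hmem u hu) v (hmem v hv)⟩
      · rcases Finset.eq_empty_or_nonempty (T ∪ D) with hAe | hAne
        · refine ⟨Function.update ρ a (fun S => w S), ?_, ?_, ?_⟩
          · intro t ht
            exact absurd (Finset.mem_union_left _ ht)
              (by rw [hAe]; exact Finset.notMem_empty t)
          · intro v hv
            have hva : v = a := by
              rcases Finset.mem_union.mp hv with h | h
              · exact absurd (Finset.mem_union_left D h)
                  (by rw [hAe]; exact Finset.notMem_empty v)
              · rcases Finset.mem_insert.mp h with rfl | h
                · rfl
                · exact absurd (Finset.mem_union_right T h)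
                    (by rw [hAe]; exact Finset.notMem_empty v)
            rw [hva, Function.update_self]
            exact good_top I w hw
          · intro u hu v hv
            have hua : u = a := by
              rcases Finset.mem_union.mp hu with h | h
              · exact absurd (Finset.mem_union_left D h)
                  (by rw [hAe]; exact Finset.notMem_empty u)
              · rcases Finset.mem_insert.mp h with rfl | h
                · rfl
                · exact absurd (Finset.mem_union_right T h)
                    (by rw [hAe]; exact Finset.notMem_empty u)
            have hva : v = a := by
              rcases Finset.mem_union.mp hv with h | h
              · exact absurd (Finset.mem_union_left D h)
                  (by rw [hAe]; exact Finset.notMem_empty v)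
              · rcases Finset.mem_insert.mp h with rfl | h
                · rfl
                · exact absurd (Finset.mem_union_right T h)
                    (by rw [hAe]; exact Finset.notMem_empty v)
            rw [hua, hva, ell1_self]
            exact hd0 a a
        · obtain ⟨p, hGp, hp⟩ := helly I w hw (T ∪ D) hAne ρ h2 (d a)
            (fun x _ => hd0 a x)
            (fun x hx y hy => le_trans (h3 x hx y hy)
              (by rw [hdsymm a x]; exact htri x a y))
          refine ⟨Function.update ρ a p, ?_, ?_, ?_⟩
          · intro t ht
            rw [Function.update_of_ne (by rintro rfl; exact haT (Finset.mem_union_left _ ht)) _ ρ]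
            exact h1 t ht
          · intro v hv
            by_cases hva : v = a
            · subst hva; rw [Function.update_self]; exact hGp
            · rw [Function.update_of_ne hva _ ρ]
              refine h2 v ?_
              rcases Finset.mem_union.mp hv with h | h
              · exact Finset.mem_union_left _ h
              · rcases Finset.mem_insert.mp h with rfl | h
                · exact absurd rfl hva
                · exact Finset.mem_union_right _ h
          · intro u hu v hv
            by_cases hua : u = a <;> by_cases hva : v = a
            · rw [hua, hva, Function.update_self, ell1_self]
              exact hd0 a a
            · rw [hua, Function.update_self, Function.update_of_ne hva _ ρ]
              have hvA : v ∈ T ∪ D := by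
                rcases Finset.mem_union.mp hv with h | h
                · exact Finset.mem_union_left _ h
                · rcases Finset.mem_insert.mp h with rfl | h
                  · exact absurd rfl hva
                  · exact Finset.mem_union_right _ h
              exact hp v hvA
            · rw [hva, Function.update_self, Function.update_of_ne hua _ ρ]
              have huA : u ∈ T ∪ D := by
                rcases Finset.mem_union.mp hu with h | h
                · exact Finset.mem_union_left _ h
                · rcases Finset.mem_insert.mp h with rfl | h
                  · exact absurd rfl hua
                  · exact Finset.mem_union_right _ h
              rw [ell1_symm, hdsymm u a]
              exact hp u huA
            · rw [Function.update_of_ne hua _ ρ, Function.update_of_ne hva _ ρ]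
              have hvA : v ∈ T ∪ D := by
                rcases Finset.mem_union.mp hv with h | h
                · exact Finset.mem_union_left _ h
                · rcases Finset.mem_insert.mp h with rfl | h
                  · exact absurd rfl hva
                  · exact Finset.mem_union_right _ h
              have huA : u ∈ T ∪ D := by
                rcases Finset.mem_union.mp hu with h | h
                · exact Finset.mem_union_left _ h
                · rcases Finset.mem_insert.mp h with rfl | h
                  · exact absurd rfl hua
                  · exact Finset.mem_union_right _ h
              exact h3 u huA v hvA
  obtain ⟨ρ, h1, h2, h3⟩ := main Finset.univ
  exact ⟨ρ, h1, fun v => h2 v (Finset.mem_union_right _ (Finset.mem_univ v)),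
    fun u v => h3 u (Finset.mem_union_right _ (Finset.mem_univ u))
      v (Finset.mem_union_right _ (Finset.mem_univ v))⟩

noncomputable def sepI (A : Finset V) (u v : V) : ℝ :=
  if (u ∈ A ∧ v ∉ A) ∨ (v ∈ A ∧ u ∉ A) then 1 else 0

lemma sepI_nonneg (A : Finset V) (u v : V) : 0 ≤ sepI A u v := by
  unfold sepI; split_ifs <;> norm_num

lemma sepI_symm (A : Finset V) (u v : V) : sepI A u v = sepI A v u := by
  unfold sepI
  congr 1
  exact propext (or_comm)

lemma sepI_triangle (A : Finset V) (u v x : V) : sepI A u x ≤ sepI A u v + sepI A v x := by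
  unfold sepI
  by_cases hu : u ∈ A <;> by_cases hv : v ∈ A <;> by_cases hx : x ∈ A <;>
    simp [hu, hv, hx] <;> norm_num

lemma crossCap_half (c : V → V → ℝ) (hsym : ∀ u v, c u v = c v u) (A : Finset V) :
    ∑ u, ∑ v, c u v * sepI A u v = 2 * crossCap c A := by
  have hAA : ∑ u ∈ A, ∑ v, c u v * sepI A u v = ∑ u ∈ A, ∑ v ∈ Aᶜ, c u v := by
    refine Finset.sum_congr rfl fun u hu => ?_
    rw [← Finset.sum_add_sum_compl A (fun v => c u v * sepI A u v)]
    have z : ∑ v ∈ A, c u v * sepI A u v = 0 :=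
      Finset.sum_eq_zero fun v hv => by simp [sepI, hu, hv]
    rw [z, zero_add]
    refine Finset.sum_congr rfl fun v hv => ?_
    have hv' : v ∉ A := Finset.mem_compl.mp hv
    simp [sepI, hu, hv']
  have hCC : ∑ u ∈ Aᶜ, ∑ v, c u v * sepI A u v = ∑ u ∈ Aᶜ, ∑ v ∈ A, c u v := by
    refine Finset.sum_congr rfl fun u hu => ?_
    have hu' : u ∉ A := Finset.mem_compl.mp hu
    rw [← Finset.sum_add_sum_compl A (fun v => c u v * sepI A u v)]
    have z : ∑ v ∈ Aᶜ, c u v * sepI A u v = 0 :=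
      Finset.sum_eq_zero fun v hv => by simp [sepI, hu', Finset.mem_compl.mp hv]
    have o : ∑ v ∈ A, c u v * sepI A u v = ∑ v ∈ A, c u v :=
      Finset.sum_congr rfl fun v hv => by simp [sepI, hu', hv]
    rw [z, o, add_zero]
  have hswap : ∑ u ∈ Aᶜ, ∑ v ∈ A, c u v = ∑ u ∈ A, ∑ v ∈ Aᶜ, c u v := by
    rw [Finset.sum_comm]
    refine Finset.sum_congr rfl fun v hv => Finset.sum_congr rfl fun u hu => hsym u v
  rw [← Finset.sum_add_sum_compl A (fun u => ∑ v, c u v * sepI A u v), hAA, hCC, hswap]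
  unfold crossCap
  ring

lemma cutVal_le (c : V → V → ℝ) (T S A : Finset V) (h1 : S ⊆ A) (h2 : Disjoint (T \ S) A) :
    cutVal c T S ≤ crossCap c A := by
  unfold cutVal
  exact Finset.inf'_le _ (Finset.mem_filter.mpr ⟨Finset.mem_univ A, h1, h2⟩)

lemma cutVal_attained (c : V → V → ℝ) (T S : Finset V) :
    ∃ A : Finset V, S ⊆ A ∧ Disjoint (T \ S) A ∧ cutVal c T S = crossCap c A := by
  obtain ⟨A, hA, hval⟩ := Finset.exists_mem_eq_inf'
    (⟨S, by simp [Finset.sdiff_disjoint]⟩ :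
      (Finset.univ.filter fun A : Finset V => S ⊆ A ∧ Disjoint (T \ S) A).Nonempty)
    (fun A => crossCap c A)
  rcases Finset.mem_filter.mp hA with ⟨-, h1, h2⟩
  exact ⟨A, h1, h2, hval⟩

lemma coarea (c : V → V → ℝ) (hc : ∀ u v, 0 ≤ c u v) (hsym : ∀ u v, c u v = c v u)
    (T S : Finset V) (hSne : S.Nonempty) (hTS : (T \ S).Nonempty) :
    ∀ (n : ℕ) (κ : ℝ) (h : V → ℝ), (Finset.univ.image h).card ≤ n → 0 ≤ κ →
    (∀ v, 0 ≤ h v) → (∀ t ∈ S, h t = 0) → (∀ t' ∈ T \ S, κ ≤ h t') →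
    2 * (κ * cutVal c T S) ≤ ∑ u, ∑ v, c u v * |h u - h v| := by
  intro n
  induction n with
  | zero =>
    intro κ h hcard _ _ hz _
    exfalso
    obtain ⟨t, ht⟩ := hSne
    have : h t ∈ Finset.univ.image h := Finset.mem_image_of_mem h (Finset.mem_univ t)
    have := Finset.card_pos.mpr ⟨h t, this⟩
    omega
  | succ n ih =>
    intro κ h hcard hκ hh0 hz hbig
    have hRHSnn : 0 ≤ ∑ u, ∑ v, c u v * |h u - h v| :=
      Finset.sum_nonneg fun u _ => Finset.sum_nonneg fun v _ =>
        mul_nonneg (hc u v) (abs_nonneg _)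
    rcases eq_or_lt_of_le hκ with hκ0 | hκpos
    · rw [← hκ0]; simpa using hRHSnn
    obtain ⟨t', ht'⟩ := hTS
    have hht' : 0 < h t' := lt_of_lt_of_le hκpos (hbig t' ht')
    set P := (Finset.univ.image h).filter (fun x => 0 < x) with hPdef
    have hPne : P.Nonempty :=
      ⟨h t', Finset.mem_filter.mpr ⟨Finset.mem_image_of_mem h (Finset.mem_univ t'), hht'⟩⟩
    set θ := P.min' hPne with hθdef
    have hθpos : 0 < θ := (Finset.mem_filter.mp (P.min'_mem hPne)).2
    have hθle : ∀ v, h v ≠ 0 → θ ≤ h v := by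
      intro v hv
      refine P.min'_le _ (Finset.mem_filter.mpr
        ⟨Finset.mem_image_of_mem h (Finset.mem_univ v), lt_of_le_of_ne (hh0 v) (Ne.symm hv)⟩)
    set θ' := min θ κ with hθ'def
    have hθ'pos : 0 < θ' := lt_min hθpos hκpos
    set A := Finset.univ.filter (fun v => h v = 0) with hAdef
    have hmemA : ∀ v, v ∈ A ↔ h v = 0 := by
      intro v; rw [hAdef, Finset.mem_filter]; simp
    have hfeas1 : S ⊆ A := fun t ht => (hmemA t).mpr (hz t ht)
    have hfeas2 : Disjoint (T \ S) A := by
      rw [Finset.disjoint_left]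
      intro x hx hxA
      have := hbig x hx
      rw [(hmemA x).mp hxA] at this
      linarith
    have hcut : cutVal c T S ≤ crossCap c A := cutVal_le c T S A hfeas1 hfeas2
    set h' : V → ℝ := fun v => if h v = 0 then 0 else h v - θ' with hh'def
    have hh'0 : ∀ v, 0 ≤ h' v := by
      intro v
      rw [hh'def]
      simp only []
      split_ifs with hv
      · exact le_refl 0
      · have h1 := hθle v hv
        have h2 : θ' ≤ h v := le_trans (min_le_left _ _) h1
        linarith
    have hθ'le : ∀ v, h v ≠ 0 → θ' ≤ h v :=
      fun v hv => le_trans (min_le_left _ _) (hθle v hv)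
    have hz' : ∀ t ∈ S, h' t = 0 := by
      intro t ht
      rw [hh'def]
      simp [hz t ht]
    have hbig' : ∀ x ∈ T \ S, κ - θ' ≤ h' x := by
      intro x hx
      have h1 := hbig x hx
      have hne : h x ≠ 0 := ne_of_gt (lt_of_lt_of_le hκpos h1)
      rw [hh'def]
      simp only [if_neg hne]
      linarith
    have key : ∀ u v, θ' * sepI A u v + |h' u - h' v| ≤ |h u - h v| := by
      intro u v
      by_cases hu : h u = 0 <;> by_cases hv : h v = 0
      · have hsep : sepI A u v = 0 := by
          unfold sepI
          rw [if_neg]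
          push_neg
          constructor
          · intro _; exact (hmemA v).mpr hv
          · intro _; exact (hmemA u).mpr hu
        rw [hsep, hh'def]
        simp [hu, hv]
      · have hsep : sepI A u v = 1 := by
          unfold sepI
          rw [if_pos (Or.inl ⟨(hmemA u).mpr hu, fun hh => hv ((hmemA v).mp hh)⟩)]
        have hv2 := hθ'le v hv
        have hv0 := hh0 v
        rw [hsep, hh'def]
        simp only [if_pos hu, if_neg hv, hu, zero_sub, abs_neg, mul_one, if_true]
        rw [abs_of_nonneg (by linarith), abs_of_nonneg hv0]
        linarith
      · have hsep : sepI A u v = 1 := by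
          unfold sepI
          rw [if_pos (Or.inr ⟨(hmemA v).mpr hv, fun hh => hu ((hmemA u).mp hh)⟩)]
        have hu2 := hθ'le u hu
        have hu0 := hh0 u
        rw [hsep, hh'def]
        simp only [if_pos hv, if_neg hu, hv, sub_zero, mul_one, if_true]
        rw [abs_of_nonneg (by linarith), abs_of_nonneg hu0]
        linarith
      · have hsep : sepI A u v = 0 := by
          unfold sepI
          rw [if_neg]
          push_neg
          constructor
          · intro hcon; exact absurd ((hmemA u).mp hcon) hu
          · intro hcon; exact absurd ((hmemA v).mp hcon) hv
        rw [hsep, hh'def]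
        simp only [if_neg hu, if_neg hv]
        have : h u - θ' - (h v - θ') = h u - h v := by ring
        rw [this]
        linarith [abs_nonneg (h u - h v)]
    have sumkey : θ' * (2 * crossCap c A) + (∑ u, ∑ v, c u v * |h' u - h' v|)
        ≤ ∑ u, ∑ v, c u v * |h u - h v| := by
      rw [← crossCap_half c hsym A]
      have expand : θ' * (∑ u, ∑ v, c u v * sepI A u v)
          = ∑ u, ∑ v, c u v * (θ' * sepI A u v) := by
        rw [Finset.mul_sum]
        refine Finset.sum_congr rfl fun u _ => ?_
        rw [Finset.mul_sum]
        exact Finset.sum_congr rfl fun v _ => by ring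
      rw [expand, ← Finset.sum_add_distrib]
      refine Finset.sum_le_sum fun u _ => ?_
      rw [← Finset.sum_add_distrib]
      refine Finset.sum_le_sum fun v _ => ?_
      have : c u v * (θ' * sepI A u v) + c u v * |h' u - h' v|
          = c u v * (θ' * sepI A u v + |h' u - h' v|) := by ring
      rw [this]
      exact mul_le_mul_of_nonneg_left (key u v) (hc u v)
    have h'RHSnn : 0 ≤ ∑ u, ∑ v, c u v * |h' u - h' v| :=
      Finset.sum_nonneg fun u _ => Finset.sum_nonneg fun v _ =>
        mul_nonneg (hc u v) (abs_nonneg _)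
    rcases le_or_gt κ θ with hcase | hcase
    · have hθ'κ : θ' = κ := min_eq_right hcase
      have e1 : θ' * (2 * cutVal c T S) ≤ θ' * (2 * crossCap c A) :=
        mul_le_mul_of_nonneg_left (by linarith) (le_of_lt hθ'pos)
      have expand2 : 2 * (κ * cutVal c T S) = θ' * (2 * cutVal c T S) := by
        rw [hθ'κ]; ring
      linarith
    · have hθ'θ : θ' = θ := min_eq_left (le_of_lt hcase)
      set f : ℝ → ℝ := fun x => if x = 0 then 0 else x - θ' with hfdef
      have himg : Finset.univ.image h' = (Finset.univ.image h).image f := by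
        rw [Finset.image_image]
        rfl
      have h0mem : (0 : ℝ) ∈ Finset.univ.image h := by
        obtain ⟨t, ht⟩ := hSne
        exact Finset.mem_image.mpr ⟨t, Finset.mem_univ t, hz t ht⟩
      have hθmem : θ ∈ Finset.univ.image h := (Finset.mem_filter.mp (P.min'_mem hPne)).1
      have hsubset : (Finset.univ.image h).image f
          ⊆ ((Finset.univ.image h).erase θ).image f := by
        intro x hx
        obtain ⟨y, hy, rfl⟩ := Finset.mem_image.mp hx
        by_cases hyθ : y = θ
        · refine Finset.mem_image.mpr ⟨0, Finset.mem_erase.mpr ⟨ne_of_lt hθpos, h0mem⟩, ?_⟩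
          simp only [hfdef, hyθ, if_true]
          rw [if_neg (ne_of_gt hθpos), hθ'θ]
          ring
        · exact Finset.mem_image.mpr ⟨y, Finset.mem_erase.mpr ⟨hyθ, hy⟩, rfl⟩
      have hcard' : (Finset.univ.image h').card ≤ n := by
        rw [himg]
        calc ((Finset.univ.image h).image f).card
            ≤ (((Finset.univ.image h).erase θ).image f).card := Finset.card_le_card hsubset
          _ ≤ ((Finset.univ.image h).erase θ).card := Finset.card_image_le
          _ = (Finset.univ.image h).card - 1 := Finset.card_erase_of_mem hθmem
          _ ≤ n := by omega
      have ihres := ih (κ - θ') h' hcard' (by linarith) hh'0 hz' hbig'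
      have e1 : θ' * (2 * cutVal c T S) ≤ θ' * (2 * crossCap c A) :=
        mul_le_mul_of_nonneg_left (by linarith) (le_of_lt hθ'pos)
      have expand2 : 2 * (κ * cutVal c T S)
          = θ' * (2 * cutVal c T S) + 2 * ((κ - θ') * cutVal c T S) := by ring
      linarith

end LamAux

/-- Main theorem: if `supp γ` is a laminar family and `D_β` dominates `D_γ` on the
terminals, then `Σ_S β_S · cut_G(S) ≥ Σ_S γ_S · cut_G(S)`. -/
theorem laminar_cut_inequality {V : Type*} [Fintype V] (c : V → V → ℝ)
    (hc : ∀ u v, 0 ≤ c u v) (hsym : ∀ u v, c u v = c v u) (T : Finset V)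
    (β γ : Finset V → ℝ)
    (hβ0 : ∀ S, 0 ≤ β S) (hγ0 : ∀ S, 0 ≤ γ S)
    (hβsupp : ∀ S, β S ≠ 0 → S ⊆ T ∧ S.Nonempty ∧ S ≠ T)
    (hγsupp : ∀ S, γ S ≠ 0 → S ⊆ T ∧ S.Nonempty ∧ S ≠ T)
    (hlaminar : ∀ S S', γ S ≠ 0 → γ S' ≠ 0 → S ⊆ S' ∨ S' ⊆ S ∨ Disjoint S S')
    (hdom : ∀ t ∈ T, ∀ t' ∈ T, Dmet T γ t t' ≤ Dmet T β t t') :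
    ∑ S ∈ properSubsetsOf T, γ S * cutVal c T S ≤
      ∑ S ∈ properSubsetsOf T, β S * cutVal c T S := by
  classical
  set I : Finset (Finset V) := Finset.univ.filter (fun S => γ S ≠ 0) with hIdef
  set J : Finset (Finset V) := Finset.univ.filter (fun S => β S ≠ 0) with hJdef
  have hImem : ∀ S, S ∈ I ↔ γ S ≠ 0 := by
    intro S; rw [hIdef, Finset.mem_filter]; simp
  have hJmem : ∀ S, S ∈ J ↔ β S ≠ 0 := by
    intro S; rw [hJdef, Finset.mem_filter]; simp
  have hIproper : I ⊆ properSubsetsOf T := by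
    intro S hS
    exact Finset.mem_filter.mpr ⟨Finset.mem_univ S, hγsupp S ((hImem S).mp hS)⟩
  have hJproper : J ⊆ properSubsetsOf T := by
    intro S hS
    exact Finset.mem_filter.mpr ⟨Finset.mem_univ S, hβsupp S ((hJmem S).mp hS)⟩
  obtain ⟨𝒜, h𝒜1, h𝒜2, h𝒜3⟩ :
      ∃ 𝒜 : Finset V → Finset V, (∀ S, S ⊆ 𝒜 S) ∧ (∀ S, Disjoint (T \ S) (𝒜 S)) ∧
        (∀ S, cutVal c T S = crossCap c (𝒜 S)) := by
    have hex := fun S => LamAux.cutVal_attained c T S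
    choose 𝒜 h1 h2 h3 using hex
    exact ⟨𝒜, h1, h2, h3⟩
  set d : V → V → ℝ := fun u v => ∑ S ∈ J, β S * LamAux.sepI (𝒜 S) u v with hddef
  have hd0 : ∀ u v, 0 ≤ d u v := fun u v =>
    Finset.sum_nonneg fun S _ => mul_nonneg (hβ0 S) (LamAux.sepI_nonneg _ _ _)
  have hdsymm : ∀ u v, d u v = d v u := fun u v =>
    Finset.sum_congr rfl fun S _ => by rw [LamAux.sepI_symm]
  have hdtri : ∀ u v x, d u x ≤ d u v + d v x := by
    intro u v x
    show (∑ S ∈ J, β S * LamAux.sepI (𝒜 S) u x) ≤ _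
    rw [← Finset.sum_add_distrib]
    refine Finset.sum_le_sum fun S _ => ?_
    rw [← mul_add]
    exact mul_le_mul_of_nonneg_left (LamAux.sepI_triangle (𝒜 S) u v x) (hβ0 S)
  have hwI : ∀ S ∈ I, 0 < γ S := fun S hS =>
    lt_of_le_of_ne (hγ0 S) (Ne.symm ((hImem S).mp hS))
  have hgood0 : ∀ t ∈ T, LamAux.Good I γ (fun S => if t ∈ S then 0 else γ S) := by
    intro t ht
    refine ⟨⟨?_, ?_⟩, ?_⟩
    · intro S hS
      by_cases htS : t ∈ S <;> simp [htS, hγ0 S, le_of_lt (hwI S hS)]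
    · intro S1 h1 S2 h2 hss hpos
      simp only [] at hpos ⊢
      have ht2 : t ∉ S2 := by
        by_contra hcon
        rw [if_pos hcon] at hpos
        exact lt_irrefl _ hpos
      have ht1 : t ∉ S1 := fun hcon => ht2 (hss.1 hcon)
      rw [if_neg ht1]
    · intro S1 h1 S2 h2 hd1 hd2
      simp only [] at hd1 hd2
      have ht1 : t ∈ S1 := by
        by_contra hcon
        rw [if_neg hcon] at hd1
        exact lt_irrefl _ hd1
      have ht2 : t ∈ S2 := by
        by_contra hcon
        rw [if_neg hcon] at hd2
        exact lt_irrefl _ hd2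
      rcases hlaminar S1 S2 ((hImem S1).mp h1) ((hImem S2).mp h2) with h | h | h
      · exact Or.inl h
      · exact Or.inr h
      · exact absurd ht2 (Finset.disjoint_left.mp h ht1)
  have hlip : ∀ t ∈ T, ∀ t' ∈ T,
      LamAux.ell1 I (fun S => if t ∈ S then 0 else γ S)
        (fun S => if t' ∈ S then 0 else γ S) ≤ d t t' := by
    intro t ht t' ht'
    have e1 : LamAux.ell1 I (fun S => if t ∈ S then 0 else γ S)
        (fun S => if t' ∈ S then 0 else γ S)
        = ∑ S ∈ I, γ S * (if cutsPair S t t' then 1 else 0) := by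
      refine Finset.sum_congr rfl fun S hS => ?_
      have hγS := le_of_lt (hwI S hS)
      by_cases h1 : t ∈ S <;> by_cases h2 : t' ∈ S <;>
        simp [h1, h2, cutsPair, abs_of_nonneg, abs_of_nonpos, hγS] <;>
        rw [abs_of_nonpos (by linarith)] <;> ring
    have e2 : ∑ S ∈ I, γ S * (if cutsPair S t t' then 1 else 0) = Dmet T γ t t' := by
      refine Finset.sum_subset hIproper fun S hSp hSI => ?_
      have : γ S = 0 := by
        by_contra hcon
        exact hSI ((hImem S).mpr hcon)
      rw [this, zero_mul]
    have e3 := hdom t ht t' ht'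
    have e4 : Dmet T β t t' ≤ d t t' := by
      have e5 : Dmet T β t t' = ∑ S ∈ J, β S * (if cutsPair S t t' then 1 else 0) := by
        refine (Finset.sum_subset hJproper fun S hSp hSJ => ?_).symm
        have : β S = 0 := by
          by_contra hcon
          exact hSJ ((hJmem S).mpr hcon)
        rw [this, zero_mul]
      rw [e5]
      refine Finset.sum_le_sum fun S hS => ?_
      refine mul_le_mul_of_nonneg_left ?_ (hβ0 S)
      by_cases hcp : cutsPair S t t'
      · rw [if_pos hcp]
        have : LamAux.sepI (𝒜 S) t t' = 1 := by
          unfold LamAux.sepI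
          rcases hcp with ⟨ha, hb⟩ | ⟨ha, hb⟩
          · rw [if_pos (Or.inl ⟨h𝒜1 S ha,
              Finset.disjoint_left.mp (h𝒜2 S) (Finset.mem_sdiff.mpr ⟨ht', hb⟩)⟩)]
          · rw [if_pos (Or.inr ⟨h𝒜1 S ha,
              Finset.disjoint_left.mp (h𝒜2 S) (Finset.mem_sdiff.mpr ⟨ht, hb⟩)⟩)]
        rw [this]
      · rw [if_neg hcp]
        exact LamAux.sepI_nonneg _ _ _
    rw [e1, e2]
    linarith
  obtain ⟨ρ, hρT, hρGood, hρLip⟩ := LamAux.extension I γ hwI d hd0 hdsymm hdtri T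
    (fun t S => if t ∈ S then 0 else γ S) hgood0 hlip
  have perS : ∀ S ∈ I, 2 * (γ S * cutVal c T S)
      ≤ ∑ u, ∑ v, c u v * |ρ u S - ρ v S| := by
    intro S hS
    obtain ⟨hsub, hne, hneT⟩ := hγsupp S ((hImem S).mp hS)
    have hTS : (T \ S).Nonempty := by
      obtain ⟨x, hxT, hxS⟩ := Finset.exists_of_ssubset (ssubset_of_subset_of_ne hsub hneT)
      exact ⟨x, Finset.mem_sdiff.mpr ⟨hxT, hxS⟩⟩
    refine LamAux.coarea c hc hsym T S hne hTS
      ((Finset.univ.image (fun v => ρ v S)).card) (γ S) (fun v => ρ v S)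
      le_rfl (hγ0 S) ?_ ?_ ?_
    · intro v
      exact ((hρGood v).1.1 S hS).1
    · intro t ht
      show ρ t S = 0
      rw [hρT t (hsub ht)]
      simp [ht]
    · intro t' ht'
      rcases Finset.mem_sdiff.mp ht' with ⟨htT, htS⟩
      show γ S ≤ ρ t' S
      rw [hρT t' htT]
      simp [htS]
  have sumI : ∑ S ∈ properSubsetsOf T, γ S * cutVal c T S
      = ∑ S ∈ I, γ S * cutVal c T S := by
    refine (Finset.sum_subset hIproper fun S hSp hSI => ?_).symm
    have : γ S = 0 := by
      by_contra hcon
      exact hSI ((hImem S).mpr hcon)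
    rw [this, zero_mul]
  have sumJ : ∑ S ∈ properSubsetsOf T, β S * cutVal c T S
      = ∑ S ∈ J, β S * cutVal c T S := by
    refine (Finset.sum_subset hJproper fun S hSp hSJ => ?_).symm
    have : β S = 0 := by
      by_contra hcon
      exact hSJ ((hJmem S).mpr hcon)
    rw [this, zero_mul]
  have step1 : 2 * ∑ S ∈ I, γ S * cutVal c T S
      ≤ ∑ S ∈ I, ∑ u, ∑ v, c u v * |ρ u S - ρ v S| := by
    rw [Finset.mul_sum]
    exact Finset.sum_le_sum perS
  have step2 : ∑ S ∈ I, ∑ u, ∑ v, c u v * |ρ u S - ρ v S|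
      = ∑ u, ∑ v, c u v * LamAux.ell1 I (ρ u) (ρ v) := by
    rw [Finset.sum_comm]
    refine Finset.sum_congr rfl fun u _ => ?_
    rw [Finset.sum_comm]
    refine Finset.sum_congr rfl fun v _ => ?_
    unfold LamAux.ell1
    rw [Finset.mul_sum]
  have step3 : ∑ u, ∑ v, c u v * LamAux.ell1 I (ρ u) (ρ v)
      ≤ ∑ u, ∑ v, c u v * d u v :=
    Finset.sum_le_sum fun u _ => Finset.sum_le_sum fun v _ =>
      mul_le_mul_of_nonneg_left (hρLip u v) (hc u v)
  have step4 : ∑ u, ∑ v, c u v * d u v = ∑ S ∈ J, β S * (2 * crossCap c (𝒜 S)) := by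
    have e1 : ∑ u, ∑ v, c u v * d u v
        = ∑ u, ∑ v, ∑ S ∈ J, β S * (c u v * LamAux.sepI (𝒜 S) u v) := by
      refine Finset.sum_congr rfl fun u _ => Finset.sum_congr rfl fun v _ => ?_
      show c u v * (∑ S ∈ J, β S * LamAux.sepI (𝒜 S) u v) = _
      rw [Finset.mul_sum]
      exact Finset.sum_congr rfl fun S _ => by ring
    have e15 : ∑ u, ∑ v, ∑ S ∈ J, β S * (c u v * LamAux.sepI (𝒜 S) u v)
        = ∑ S ∈ J, ∑ u, ∑ v, β S * (c u v * LamAux.sepI (𝒜 S) u v) :=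
      calc ∑ u, ∑ v, ∑ S ∈ J, β S * (c u v * LamAux.sepI (𝒜 S) u v)
          = ∑ u, ∑ S ∈ J, ∑ v, β S * (c u v * LamAux.sepI (𝒜 S) u v) :=
            Finset.sum_congr rfl fun u _ => Finset.sum_comm
        _ = ∑ S ∈ J, ∑ u, ∑ v, β S * (c u v * LamAux.sepI (𝒜 S) u v) :=
            Finset.sum_comm
    rw [e1, e15]
    refine Finset.sum_congr rfl fun S _ => ?_
    rw [← LamAux.crossCap_half c hsym (𝒜 S), Finset.mul_sum]
    refine Finset.sum_congr rfl fun u _ => ?_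
    rw [Finset.mul_sum]
  have step5 : ∑ S ∈ J, β S * (2 * crossCap c (𝒜 S))
      = 2 * ∑ S ∈ J, β S * cutVal c T S := by
    rw [Finset.mul_sum]
    refine Finset.sum_congr rfl fun S _ => ?_
    rw [h𝒜3 S]
    ring
  rw [sumI, sumJ]
  linarith
end

section
/- Let T = {1,2,3,4} and let G be any edge-capacitated graph containing T. Then cut_G({1,2}) + cut_G({1,3}) + cut_G({1,4}) ≥ cut_G({1}) + cut_G({2}) + cut_G({3}) + cut_G({4}). -/
open Finset
open scoped Classical

namespace FourTerm

def ind (x y : Bool) : ℕ := if x = y then 0 else 1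

lemma key (a b c a' b' c' : Bool) :
    ind (a && (b && c)) (a' && (b' && c')) + ind (a && !(b || c)) (a' && !(b' || c'))
      + ind (b && !(a || c)) (b' && !(a' || c')) + ind (c && !(a || b)) (c' && !(a' || b'))
    ≤ ind a a' + ind b b' + ind c c' := by
  revert a b c a' b' c'; decide

variable {V : Type*} [Fintype V]

noncomputable def F (c : V → V → ℝ) (A : Finset V) : ℝ :=
  ∑ u, ∑ v, c u v * (ind (decide (u ∈ A)) (decide (v ∈ A)) : ℕ)

lemma cross_eq (c : V → V → ℝ) (B : Finset V) :
    crossCap c B = ∑ u, ∑ v, if u ∈ B ∧ v ∉ B then c u v else 0 := by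
  have inner : ∀ u, (∑ v, if u ∈ B ∧ v ∉ B then c u v else 0)
      = if u ∈ B then ∑ v ∈ Bᶜ, c u v else 0 := by
    intro u
    by_cases hu : u ∈ B
    · rw [if_pos hu, Finset.sum_congr rfl (fun v _ => show (if u ∈ B ∧ v ∉ B then c u v else 0)
          = if v ∈ Bᶜ then c u v else 0 by simp [hu]), Finset.sum_ite_mem, Finset.univ_inter]
    · simp [hu]
  rw [crossCap]
  simp_rw [inner]
  rw [Finset.sum_ite_mem, Finset.univ_inter]

lemma F_eq (c : V → V → ℝ) (hsym : ∀ u v, c u v = c v u) (A : Finset V) :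
    F c A = 2 * crossCap c A := by
  have h : ∀ u v : V, (c u v * (ind (decide (u ∈ A)) (decide (v ∈ A)) : ℕ) : ℝ)
      = (if u ∈ A ∧ v ∉ A then c u v else 0) + (if v ∈ A ∧ u ∉ A then c u v else 0) := by
    intro u v
    by_cases hu : u ∈ A <;> by_cases hv : v ∈ A <;> simp [ind, hu, hv]
  have h2 : (∑ u, ∑ v, if v ∈ A ∧ u ∉ A then c u v else 0) = crossCap c A := by
    rw [Finset.sum_comm, cross_eq]
    refine Finset.sum_congr rfl fun v _ => Finset.sum_congr rfl fun u _ => ?_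
    split_ifs <;> simp [hsym u v]
  rw [F]
  simp_rw [h, Finset.sum_add_distrib]
  rw [h2, ← cross_eq]
  ring

lemma F_ineq (c : V → V → ℝ) (hc : ∀ u v, 0 ≤ c u v) (A B C : Finset V) :
    F c (A ∩ B ∩ C) + F c (A \ (B ∪ C)) + F c (B \ (A ∪ C)) + F c (C \ (A ∪ B))
      ≤ F c A + F c B + F c C := by
  simp only [F, ← Finset.sum_add_distrib]
  refine Finset.sum_le_sum fun u _ => Finset.sum_le_sum fun v _ => ?_
  simp only [← mul_add]
  refine mul_le_mul_of_nonneg_left ?_ (hc u v)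
  have e1 : ∀ w : V, decide (w ∈ A ∩ B ∩ C)
      = (decide (w ∈ A) && (decide (w ∈ B) && decide (w ∈ C))) := by
    intro w; simp [Finset.mem_inter, Bool.and_assoc]
  have e2 : ∀ w : V, decide (w ∈ A \ (B ∪ C))
      = (decide (w ∈ A) && !(decide (w ∈ B) || decide (w ∈ C))) := by
    intro w; simp [Finset.mem_sdiff, Finset.mem_union]
  have e3 : ∀ w : V, decide (w ∈ B \ (A ∪ C))
      = (decide (w ∈ B) && !(decide (w ∈ A) || decide (w ∈ C))) := by
    intro w; simp [Finset.mem_sdiff, Finset.mem_union]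
  have e4 : ∀ w : V, decide (w ∈ C \ (A ∪ B))
      = (decide (w ∈ C) && !(decide (w ∈ A) || decide (w ∈ B))) := by
    intro w; simp [Finset.mem_sdiff, Finset.mem_union]
  rw [e1, e1, e2, e2, e3, e3, e4, e4]
  exact_mod_cast key (decide (u ∈ A)) (decide (u ∈ B)) (decide (u ∈ C))
    (decide (v ∈ A)) (decide (v ∈ B)) (decide (v ∈ C))

lemma cutVal_le (c : V → V → ℝ) (T S A : Finset V) (h1 : S ⊆ A) (h2 : Disjoint (T \ S) A) :
    cutVal c T S ≤ crossCap c A :=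
  Finset.inf'_le _ (by simp [h1, h2])

lemma exists_min (c : V → V → ℝ) (T S : Finset V) :
    ∃ A : Finset V, S ⊆ A ∧ Disjoint (T \ S) A ∧ cutVal c T S = crossCap c A := by
  obtain ⟨A, hA, hval⟩ := Finset.exists_mem_eq_inf'
    (⟨S, by simp [Finset.sdiff_disjoint]⟩ :
      (Finset.univ.filter fun A : Finset V => S ⊆ A ∧ Disjoint (T \ S) A).Nonempty)
    (fun A => crossCap c A)
  simp only [Finset.mem_filter] at hA
  exact ⟨A, hA.2.1, hA.2.2, hval⟩

end FourTerm

/-- For four terminals `T = {t₁,t₂,t₃,t₄}` in any edge-capacitated graph,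
`cut({1,2}) + cut({1,3}) + cut({1,4}) ≥ cut({1}) + cut({2}) + cut({3}) + cut({4})`. -/
theorem four_terminal_inequality {V : Type*} [Fintype V] (c : V → V → ℝ)
    (hc : ∀ u v, 0 ≤ c u v) (hsym : ∀ u v, c u v = c v u)
    (t1 t2 t3 t4 : V)
    (h12 : t1 ≠ t2) (h13 : t1 ≠ t3) (h14 : t1 ≠ t4)
    (h23 : t2 ≠ t3) (h24 : t2 ≠ t4) (h34 : t3 ≠ t4) :
    cutVal c {t1, t2, t3, t4} {t1} + cutVal c {t1, t2, t3, t4} {t2} +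
        cutVal c {t1, t2, t3, t4} {t3} + cutVal c {t1, t2, t3, t4} {t4} ≤
      cutVal c {t1, t2, t3, t4} {t1, t2} + cutVal c {t1, t2, t3, t4} {t1, t3} +
        cutVal c {t1, t2, t3, t4} {t1, t4} := by
  set T : Finset V := {t1, t2, t3, t4} with hT
  obtain ⟨A, hAsub, hAdis, hAval⟩ := FourTerm.exists_min c T {t1, t2}
  obtain ⟨B, hBsub, hBdis, hBval⟩ := FourTerm.exists_min c T {t1, t3}
  obtain ⟨C, hCsub, hCdis, hCval⟩ := FourTerm.exists_min c T {t1, t4}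
  -- membership facts
  have ht1A : t1 ∈ A := hAsub (by simp)
  have ht2A : t2 ∈ A := hAsub (by simp)
  have ht1B : t1 ∈ B := hBsub (by simp)
  have ht3B : t3 ∈ B := hBsub (by simp)
  have ht1C : t1 ∈ C := hCsub (by simp)
  have ht4C : t4 ∈ C := hCsub (by simp)
  have ht3A : t3 ∉ A := Finset.disjoint_left.mp hAdis (by simp [hT, h13.symm, h23.symm])
  have ht4A : t4 ∉ A := Finset.disjoint_left.mp hAdis (by simp [hT, h14.symm, h24.symm])
  have ht2B : t2 ∉ B := Finset.disjoint_left.mp hBdis (by simp [hT, h12.symm, h23])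
  have ht4B : t4 ∉ B := Finset.disjoint_left.mp hBdis (by simp [hT, h14.symm, h34.symm])
  have ht2C : t2 ∉ C := Finset.disjoint_left.mp hCdis (by simp [hT, h12.symm, h24])
  have ht3C : t3 ∉ C := Finset.disjoint_left.mp hCdis (by simp [hT, h13.symm, h34])
  -- the four candidate sets
  have hQ1 : cutVal c T {t1} ≤ crossCap c (A ∩ B ∩ C) := by
    refine FourTerm.cutVal_le c T {t1} _ (by simp [ht1A, ht1B, ht1C]) ?_
    rw [Finset.disjoint_left]
    intro x hx hx'
    simp only [hT, Finset.mem_sdiff, Finset.mem_insert, Finset.mem_singleton] at hx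
    simp only [Finset.mem_inter] at hx'
    rcases hx.1 with rfl | rfl | rfl | rfl
    · exact hx.2 (by simp)
    · exact ht2B hx'.1.2
    · exact ht3A hx'.1.1
    · exact ht4A hx'.1.1
  have hQ2 : cutVal c T {t2} ≤ crossCap c (A \ (B ∪ C)) := by
    refine FourTerm.cutVal_le c T {t2} _ (by simp [ht2A, ht2B, ht2C]) ?_
    rw [Finset.disjoint_left]
    intro x hx hx'
    simp only [hT, Finset.mem_sdiff, Finset.mem_insert, Finset.mem_singleton] at hx
    simp only [Finset.mem_sdiff, Finset.mem_union] at hx'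
    rcases hx.1 with rfl | rfl | rfl | rfl
    · exact hx'.2 (Or.inl ht1B)
    · exact hx.2 (by simp)
    · exact ht3A hx'.1
    · exact ht4A hx'.1
  have hQ3 : cutVal c T {t3} ≤ crossCap c (B \ (A ∪ C)) := by
    refine FourTerm.cutVal_le c T {t3} _ (by simp [ht3B, ht3A, ht3C]) ?_
    rw [Finset.disjoint_left]
    intro x hx hx'
    simp only [hT, Finset.mem_sdiff, Finset.mem_insert, Finset.mem_singleton] at hx
    simp only [Finset.mem_sdiff, Finset.mem_union] at hx'
    rcases hx.1 with rfl | rfl | rfl | rfl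
    · exact hx'.2 (Or.inl ht1A)
    · exact ht2B hx'.1
    · exact hx.2 (by simp)
    · exact ht4B hx'.1
  have hQ4 : cutVal c T {t4} ≤ crossCap c (C \ (A ∪ B)) := by
    refine FourTerm.cutVal_le c T {t4} _ (by simp [ht4C, ht4A, ht4B]) ?_
    rw [Finset.disjoint_left]
    intro x hx hx'
    simp only [hT, Finset.mem_sdiff, Finset.mem_insert, Finset.mem_singleton] at hx
    simp only [Finset.mem_sdiff, Finset.mem_union] at hx'
    rcases hx.1 with rfl | rfl | rfl | rfl
    · exact hx'.2 (Or.inl ht1A)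
    · exact ht2C hx'.1
    · exact ht3C hx'.1
    · exact hx.2 (by simp)
  have hmain := FourTerm.F_ineq c hc A B C
  rw [FourTerm.F_eq c hsym, FourTerm.F_eq c hsym, FourTerm.F_eq c hsym,
    FourTerm.F_eq c hsym, FourTerm.F_eq c hsym, FourTerm.F_eq c hsym,
    FourTerm.F_eq c hsym] at hmain
  linarith
end
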